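/- Corollary. Let γ̄ ≥ 0 and let w' = w + (μ̄/α) e x with μ̄ = 1 − γ̄/|e| be the SM-NLMS update performed when |e| > γ̄. If an update occurs (|e| > γ̄) and ẽ² ≥ n², then ‖w_o − w'‖² < ‖w_o − w‖², i.e., the SM-NLMS update strictly improves the parameter estimate. -/

import Mathlib

open RealInnerProductSpace

/-- when the SM-NLMS algorithm performs an update (`|e| > γ`) and the
noiseless error dominates the noise (`ẽ² ≥ n²`), the update strictly improves the
parameter estimate. -/
theorem sm_nlms_update_improves (N : ℕ) (w_o w x : EuclideanSpace ℝ (Fin (N + 1)))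
    (n δ γ : ℝ) (hδ : 0 < δ) (hγ : 0 ≤ γ) :
    let d : ℝ := ⟪w_o, x⟫ + n
    let e : ℝ := d - ⟪w, x⟫
    let et : ℝ := ⟪w_o - w, x⟫
    let α : ℝ := ‖x‖ ^ 2 + δ
    let μb : ℝ := 1 - γ / |e|
    let w' : EuclideanSpace ℝ (Fin (N + 1)) := w + ((μb / α) * e) • x
    γ < |e| → n ^ 2 ≤ et ^ 2 → ‖w_o - w'‖ ^ 2 < ‖w_o - w‖ ^ 2 := by
  intro d e et α μb w' hupd hdom
  have habs : 0 < |e| := lt_of_le_of_lt hγ hupd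
  have he0 : e ≠ 0 := abs_pos.mp habs
  have hα : 0 < α := by positivity
  have hxα : ‖x‖ ^ 2 < α := by
    show ‖x‖ ^ 2 < ‖x‖ ^ 2 + δ
    linarith
  have hμpos : 0 < μb := by
    have : γ / |e| < 1 := (div_lt_one habs).mpr hupd
    simpa [μb] using sub_pos.mpr this
  have hμle : μb ≤ 1 := by
    have : 0 ≤ γ / |e| := div_nonneg hγ habs.le
    simp only [μb]
    linarith
  have hee : e = et + n := by
    simp only [e, et, d, inner_sub_left]
    ring
  have hw' : w_o - w' = (w_o - w) - ((μb / α) * e) • x := by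
    show w_o - (w + ((μb / α) * e) • x) = _
    rw [sub_add_eq_sub_sub]
  have hexp : ‖w_o - w'‖ ^ 2
      = ‖w_o - w‖ ^ 2 - 2 * (((μb / α) * e) * et) + ((μb / α) * e) ^ 2 * ‖x‖ ^ 2 := by
    rw [hw', norm_sub_sq_real, real_inner_smul_right, norm_smul, mul_pow,
      Real.norm_eq_abs, sq_abs]
  have he2 : 0 < e ^ 2 := by positivity
  have hkey : e ^ 2 ≤ 2 * (e * et) := by rw [hee]; nlinarith [hdom]
  have h1 : μb * (e ^ 2 * ‖x‖ ^ 2) < α * e ^ 2 := by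
    have t1 : μb * (e ^ 2 * ‖x‖ ^ 2) ≤ 1 * (e ^ 2 * ‖x‖ ^ 2) :=
      mul_le_mul_of_nonneg_right hμle (by positivity)
    have t2 : e ^ 2 * ‖x‖ ^ 2 < e ^ 2 * α := mul_lt_mul_of_pos_left hxα he2
    nlinarith
  have h3 : μb * (e ^ 2 * ‖x‖ ^ 2) < 2 * α * (e * et) := by
    nlinarith [mul_le_mul_of_nonneg_left hkey hα.le]
  have hpos : 0 < μb / α ^ 2 := by positivity
  have heq : 2 * (((μb / α) * e) * et) - ((μb / α) * e) ^ 2 * ‖x‖ ^ 2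
      = (μb / α ^ 2) * (2 * α * (e * et) - μb * (e ^ 2 * ‖x‖ ^ 2)) := by
    field_simp
  have hfin : 0 < 2 * (((μb / α) * e) * et) - ((μb / α) * e) ^ 2 * ‖x‖ ^ 2 := by
    rw [heq]
    exact mul_pos hpos (sub_pos.mpr h3)
  rw [hexp]
  linarith
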